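/- Let X : Ω → ℝ^p be an integrable random vector, α, β₀ ∈ ℝ^p, and let B⊤X = (⟨α, X⟩, ⟨β₀, X⟩) ∈ ℝ². Suppose the linear conditional mean assumption holds: E[X | B⊤X] = D · (B⊤X) almost surely for a non-random matrix D ∈ ℝ^{p×2}. Let μ' : ℝ → ℝ be Borel measurable with E[‖X‖₂ · |μ'(⟨β₀, X⟩)|] < ∞. Then for every t ∈ ℝ: E[X · μ'(⟨β₀, X⟩) · 1{⟨α, X⟩ ≤ t}] = D · E[(B⊤X) · μ'(⟨β₀, X⟩) · 1{⟨α, X⟩ ≤ t}], i.e., the shift function factors as M(t) = D M₀(t) with M₀(t) = E[B⊤X μ'(β₀⊤X) 1{α⊤X ≤ t}] ∈ ℝ². -/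

import Mathlib

open MeasureTheory
open scoped RealInnerProductSpace

lemma euclid_abs_apply_le_norm {p : ℕ} (x : EuclideanSpace ℝ (Fin p)) (i : Fin p) :
    |x i| ≤ ‖x‖ := by
  have h := abs_real_inner_le_norm (EuclideanSpace.single i (1 : ℝ)) x
  simpa [EuclideanSpace.inner_single_left] using h

/-- Factorization of the shift function under the linear conditional mean assumption
(Condition (A4)): if `E[X | BᵀX] = D · (BᵀX)` a.s. (componentwise), where
`BᵀX = (⟨α, X⟩, ⟨β₀, X⟩)`, and `E[‖X‖₂ |μ'(⟨β₀, X⟩)|] < ∞`, then for every `t ∈ ℝ`,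
`E[X μ'(⟨β₀, X⟩) 1{⟨α, X⟩ ≤ t}] = D · E[(BᵀX) μ'(⟨β₀, X⟩) 1{⟨α, X⟩ ≤ t}]`,
i.e. `M(t) = D M₀(t)`. -/
theorem shift_function_factorization
    {Ω : Type*} [MeasurableSpace Ω] (μ : Measure Ω) [IsProbabilityMeasure μ]
    {p : ℕ} (X : Ω → EuclideanSpace ℝ (Fin p)) (hX : Measurable X)
    (hXint : Integrable X μ)
    (α β₀ : EuclideanSpace ℝ (Fin p))
    (D : Matrix (Fin p) (Fin 2) ℝ)
    (hlin : ∀ i : Fin p,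
      μ[fun ω => X ω i |
          MeasurableSpace.comap (fun ω => (⟪α, X ω⟫, ⟪β₀, X ω⟫)) inferInstance]
        =ᵐ[μ] fun ω => D.mulVec ![⟪α, X ω⟫, ⟪β₀, X ω⟫] i)
    (μ' : ℝ → ℝ) (hμ' : Measurable μ')
    (hint : Integrable (fun ω => ‖X ω‖ * |μ' ⟪β₀, X ω⟫|) μ) :
    ∀ t : ℝ, ∀ i : Fin p,
      ∫ ω in {ω | ⟪α, X ω⟫ ≤ t}, X ω i * μ' ⟪β₀, X ω⟫ ∂μ
        = D.mulVec
            (fun j => ∫ ω in {ω | ⟪α, X ω⟫ ≤ t},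
              (![⟪α, X ω⟫, ⟪β₀, X ω⟫] j) * μ' ⟪β₀, X ω⟫ ∂μ) i := by
  intro t i
  classical
  rename_i mΩ hprob
  -- basic measurability
  have hα : Measurable (fun ω => ⟪α, X ω⟫) :=
    ((continuous_const.inner continuous_id).measurable).comp hX
  have hβ : Measurable (fun ω => ⟪β₀, X ω⟫) :=
    ((continuous_const.inner continuous_id).measurable).comp hX
  have hφm : Measurable (fun ω => (⟪α, X ω⟫, ⟪β₀, X ω⟫)) := hα.prodMk hβ
  have hm : MeasurableSpace.comap (fun ω => (⟪α, X ω⟫, ⟪β₀, X ω⟫)) inferInstance ≤ mΩ :=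
    hφm.comap_le
  haveI : SigmaFinite (μ.trim hm) := by
    have : IsFiniteMeasure (μ.trim hm) := isFiniteMeasure_trim hm
    infer_instance
  -- the m-measurable multiplier
  set f : Ω → ℝ := fun ω => (if ⟪α, X ω⟫ ≤ t then (1 : ℝ) else 0) * μ' ⟪β₀, X ω⟫ with hf_def
  have hh : Measurable (fun q : ℝ × ℝ => (if q.1 ≤ t then (1 : ℝ) else 0) * μ' q.2) := by
    exact (Measurable.ite (measurableSet_le measurable_fst measurable_const)
      measurable_const measurable_const).mul (hμ'.comp measurable_snd)
  have hf_meas : StronglyMeasurable[MeasurableSpace.comap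
      (fun ω => (⟪α, X ω⟫, ⟪β₀, X ω⟫)) inferInstance] f := by
    have hφm' : Measurable[MeasurableSpace.comap
        (fun ω => (⟪α, X ω⟫, ⟪β₀, X ω⟫)) inferInstance]
        (fun ω => (⟪α, X ω⟫, ⟪β₀, X ω⟫)) :=
      Measurable.of_comap_le le_rfl
    exact (hh.comp hφm').stronglyMeasurable
  have hf_abs : ∀ ω, |f ω| ≤ |μ' ⟪β₀, X ω⟫| := by
    intro ω
    by_cases h : ⟪α, X ω⟫ ≤ t
    · simp only [hf_def, if_pos h, one_mul, le_refl]
    · simp only [hf_def, if_neg h, zero_mul, abs_zero]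
      exact abs_nonneg _
  -- integrability facts
  have hXi_meas : Measurable (fun ω => X ω i) := (measurable_pi_apply i).comp ((WithLp.measurable_ofLp _ _).comp hX)
  have hXi : Integrable (fun ω => X ω i) μ := by
    refine hXint.norm.mono hXi_meas.aestronglyMeasurable (Filter.Eventually.of_forall fun ω => ?_)
    simpa [Real.norm_eq_abs, abs_of_nonneg (norm_nonneg _)] using
      euclid_abs_apply_le_norm (X ω) i
  have hfXi : Integrable (fun ω => f ω * X ω i) μ := by
    refine hint.mono ((hf_meas.mono hm).measurable.mul hXi_meas).aestronglyMeasurable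
      (Filter.Eventually.of_forall fun ω => ?_)
    have h1 : |f ω * X ω i| ≤ |μ' ⟪β₀, X ω⟫| * ‖X ω‖ := by
      rw [abs_mul]
      exact mul_le_mul (hf_abs ω) (euclid_abs_apply_le_norm (X ω) i) (abs_nonneg _)
        (abs_nonneg _)
    simp only [Real.norm_eq_abs, abs_mul, abs_norm, abs_abs]
    rw [mul_comm (‖X ω‖)]
    rw [abs_mul] at h1
    exact h1
  have hinner_int : ∀ v : EuclideanSpace ℝ (Fin p),
      Integrable (fun ω => f ω * ⟪v, X ω⟫) μ := by
    intro v
    refine (hint.const_mul ‖v‖).mono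
      (((hf_meas.mono hm).measurable.mul
        (((continuous_const.inner continuous_id).measurable).comp hX)).aestronglyMeasurable)
      (Filter.Eventually.of_forall fun ω => ?_)
    simp only [Real.norm_eq_abs, abs_mul, abs_norm, abs_abs]
    calc |f ω| * |⟪v, X ω⟫| ≤ |μ' ⟪β₀, X ω⟫| * (‖v‖ * ‖X ω‖) :=
        mul_le_mul (hf_abs ω) (abs_real_inner_le_norm v (X ω)) (abs_nonneg _) (abs_nonneg _)
      _ = ‖v‖ * (‖X ω‖ * |μ' ⟪β₀, X ω⟫|) := by ring
  have hB : ∀ j : Fin 2, Integrable (fun ω => f ω * ![⟪α, X ω⟫, ⟪β₀, X ω⟫] j) μ := by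
    intro j
    fin_cases j
    · simpa using hinner_int α
    · simpa using hinner_int β₀
  -- key identity via conditional expectation
  have hmul : μ[(fun ω => f ω * X ω i) | MeasurableSpace.comap
        (fun ω => (⟪α, X ω⟫, ⟪β₀, X ω⟫)) inferInstance]
      =ᵐ[μ] fun ω => f ω * (μ[(fun ω => X ω i) | MeasurableSpace.comap
        (fun ω => (⟪α, X ω⟫, ⟪β₀, X ω⟫)) inferInstance]) ω := by
    have := condExp_mul_of_stronglyMeasurable_left (μ := μ) hf_meas
      (by exact hfXi) hXi
    exact this
  have key : ∫ ω, f ω * X ω i ∂μ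
      = ∫ ω, f ω * D.mulVec ![⟪α, X ω⟫, ⟪β₀, X ω⟫] i ∂μ := by
    calc ∫ ω, f ω * X ω i ∂μ = ∫ ω, (μ[(fun ω => f ω * X ω i) | MeasurableSpace.comap
          (fun ω => (⟪α, X ω⟫, ⟪β₀, X ω⟫)) inferInstance]) ω ∂μ :=
          (integral_condExp hm).symm
      _ = ∫ ω, f ω * (μ[(fun ω => X ω i) | MeasurableSpace.comap
          (fun ω => (⟪α, X ω⟫, ⟪β₀, X ω⟫)) inferInstance]) ω ∂μ := integral_congr_ae hmul
      _ = ∫ ω, f ω * D.mulVec ![⟪α, X ω⟫, ⟪β₀, X ω⟫] i ∂μ := by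
          refine integral_congr_ae ?_
          filter_upwards [hlin i] with ω hω
          rw [hω]
  -- rewrite set integrals as integrals against f
  have hs : MeasurableSet {ω | ⟪α, X ω⟫ ≤ t} := measurableSet_le hα measurable_const
  have hset : ∀ g : Ω → ℝ,
      ∫ ω in {ω | ⟪α, X ω⟫ ≤ t}, g ω * μ' ⟪β₀, X ω⟫ ∂μ = ∫ ω, f ω * g ω ∂μ := by
    intro g
    rw [← integral_indicator hs]
    refine integral_congr_ae (Filter.Eventually.of_forall fun ω => ?_)
    simp only [Set.indicator_apply, Set.mem_setOf_eq, hf_def]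
    by_cases h : ⟪α, X ω⟫ ≤ t
    · rw [if_pos h, if_pos h]
      ring
    · rw [if_neg h, if_neg h]
      ring
  rw [hset (fun ω => X ω i), key]
  -- expand mulVec on both sides
  simp only [Matrix.mulVec, dotProduct, Fin.sum_univ_two]
  rw [hset (fun ω => ![⟪α, X ω⟫, ⟪β₀, X ω⟫] 0), hset (fun ω => ![⟪α, X ω⟫, ⟪β₀, X ω⟫] 1)]
  have h0 := hB 0
  have h1 := hB 1
  rw [show (fun ω => f ω * (D i 0 * ![⟪α, X ω⟫, ⟪β₀, X ω⟫] 0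
      + D i 1 * ![⟪α, X ω⟫, ⟪β₀, X ω⟫] 1))
      = fun ω => D i 0 * (f ω * ![⟪α, X ω⟫, ⟪β₀, X ω⟫] 0)
        + D i 1 * (f ω * ![⟪α, X ω⟫, ⟪β₀, X ω⟫] 1) from funext fun ω => by ring]
  rw [integral_add (h0.const_mul _) (h1.const_mul _), integral_const_mul, integral_const_mul]
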